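/- Let α and β be algebraic units with [ℚ(α):ℚ] = 3 and [ℚ(β):ℚ] = 3, and suppose αβ has degree 2 over ℚ. Then (αβ)^3 = ±1. -/

import Mathlib

set_option maxHeartbeats 1000000
set_option synthInstance.maxHeartbeats 400000


open Polynomial IntermediateField

/-- An algebraic unit: root of a monic integer polynomial with constant term ±1. -/
def IsAlgebraicUnit (α : ℂ) : Prop :=
  ∃ p : Polynomial ℤ, p.Monic ∧ (p.coeff 0 = 1 ∨ p.coeff 0 = -1) ∧ Polynomial.aeval α p = 0

/-- The degree of α over ℚ, i.e. [ℚ(α):ℚ]. -/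
noncomputable def degQ (α : ℂ) : ℕ := (minpoly ℚ α).natDegree

lemma unit_int {x : ℂ} (hx : IsAlgebraicUnit x) : IsIntegral ℤ x := by
  obtain ⟨p, hm, _, hr⟩ := hx; exact ⟨p, hm, hr⟩

lemma unit_coeff0 {x : ℂ} (hx : IsAlgebraicUnit x) :
    (minpoly ℚ x).coeff 0 = 1 ∨ (minpoly ℚ x).coeff 0 = -1 := by
  obtain ⟨p, hm, hc, hr⟩ := hx
  have hint : IsIntegral ℤ x := ⟨p, hm, hr⟩
  have hdvd : minpoly ℤ x ∣ p := minpoly.isIntegrallyClosed_dvd hint hr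
  obtain ⟨q, hq⟩ := hdvd
  have hc0 : (minpoly ℤ x).coeff 0 ∣ p.coeff 0 := by
    rw [hq, Polynomial.mul_coeff_zero]; exact Dvd.intro _ rfl
  have hu : IsUnit ((minpoly ℤ x).coeff 0) := by
    rcases hc with h | h <;> rw [h] at hc0
    · exact isUnit_of_dvd_one hc0
    · exact isUnit_of_dvd_unit hc0 (by simp)
  have heq : minpoly ℚ x = (minpoly ℤ x).map (algebraMap ℤ ℚ) :=
    minpoly.isIntegrallyClosed_eq_field_fractions' ℚ hint
  rw [heq, Polynomial.coeff_map]
  rcases Int.isUnit_iff.mp hu with h | h <;> rw [h] <;> simp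

lemma key (F : IntermediateField ℚ ℂ) [FiniteDimensional ℚ F] (hF : Module.finrank ℚ F = 2)
    (x : ℂ) (hx : IsIntegral ℚ x) (hdeg : (minpoly ℚ x).natDegree = 3) :
    minpoly F x = (minpoly ℚ x).map (algebraMap ℚ F) := by
  have hxF : IsIntegral F x := hx.tower_top
  have hdvd : minpoly F x ∣ (minpoly ℚ x).map (algebraMap ℚ F) :=
    minpoly.dvd_map_of_isScalarTower ℚ F x
  have hmapm : ((minpoly ℚ x).map (algebraMap ℚ F)).Monic := (minpoly.monic hx).map _
  have hmapdeg : ((minpoly ℚ x).map (algebraMap ℚ F)).natDegree = 3 := by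
    rw [Polynomial.natDegree_map, hdeg]
  have hle : (minpoly F x).natDegree ≤ 3 := by
    have := Polynomial.natDegree_le_of_dvd hdvd hmapm.ne_zero
    rwa [hmapdeg] at this
  set L := F⟮x⟯
  have hFD : FiniteDimensional F L := adjoin.finiteDimensional hxF
  have hFDQ : FiniteDimensional ℚ L := FiniteDimensional.trans ℚ F L
  have hfr : Module.finrank F L = (minpoly F x).natDegree := adjoin.finrank hxF
  have h3dvd : 3 ∣ (minpoly F x).natDegree := by
    set y : L := ⟨x, mem_adjoin_simple_self F x⟩
    have hy : algebraMap L ℂ y = x := rfl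
    have hyi : IsIntegral ℚ y := by
      rwa [← isIntegral_algebraMap_iff (algebraMap L ℂ).injective, hy]
    have hmp : minpoly ℚ y = minpoly ℚ x := by
      rw [← hy, minpoly.algebraMap_eq (algebraMap L ℂ).injective]
    have hd : (minpoly ℚ y).natDegree ∣ Module.finrank ℚ L := minpoly.degree_dvd hyi
    rw [hmp, hdeg] at hd
    have htower : Module.finrank ℚ L = Module.finrank ℚ F * Module.finrank F L :=
      (Module.finrank_mul_finrank ℚ F L).symm
    rw [htower, hF, hfr] at hd
    exact (Nat.Coprime.dvd_of_dvd_mul_left (by norm_num) hd)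
  have hdeq : (minpoly F x).natDegree = 3 :=
    le_antisymm hle (Nat.le_of_dvd (minpoly.natDegree_pos hxF) h3dvd)
  obtain ⟨u, hu⟩ := hdvd
  have hum : u.Monic := by
    have := hmapm
    rw [hu] at this
    exact (minpoly.monic hxF).of_mul_monic_left this
  have hudeg : u.natDegree = 0 := by
    have := hmapdeg
    rw [hu, Polynomial.natDegree_mul (minpoly.ne_zero hxF) hum.ne_zero, hdeq] at this
    omega
  have : u = 1 := Polynomial.eq_one_of_monic_natDegree_zero hum hudeg
  rw [hu, this, mul_one]

theorem stmt_19 (α β : ℂ) (hα : IsAlgebraicUnit α) (hβ : IsAlgebraicUnit β)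
    (h1 : degQ α = 3) (h2 : degQ β = 3) (h3 : degQ (α * β) = 2) :
    (α * β) ^ 3 = 1 ∨ (α * β) ^ 3 = -1 := by
  have hαi : IsIntegral ℚ α := (unit_int hα).tower_top
  have hβi : IsIntegral ℚ β := (unit_int hβ).tower_top
  have hγi : IsIntegral ℚ (α * β) := hαi.mul hβi
  have hα0 : α ≠ 0 := by
    rintro rfl
    rw [degQ, minpoly.zero] at h1
    simp at h1
  set F := ℚ⟮α * β⟯ with hFdef
  have hFDF : FiniteDimensional ℚ F := adjoin.finiteDimensional hγi
  have hF2 : Module.finrank ℚ F = 2 := by rw [adjoin.finrank hγi]; exact h3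
  have kα := key F hF2 α hαi h1
  have kβ := key F hF2 β hβi h2
  have hαF : IsIntegral F α := hαi.tower_top
  have hβF : IsIntegral F β := hβi.tower_top
  have cα01 : (minpoly F α).coeff 0 = 1 ∨ (minpoly F α).coeff 0 = -1 := by
    rw [kα, Polynomial.coeff_map]
    rcases unit_coeff0 hα with h | h <;> rw [h] <;> simp
  have cβ01 : (minpoly F β).coeff 0 = 1 ∨ (minpoly F β).coeff 0 = -1 := by
    rw [kβ, Polynomial.coeff_map]
    rcases unit_coeff0 hβ with h | h <;> rw [h] <;> simp
  have dα : (minpoly F α).natDegree = 3 := by rw [kα, Polynomial.natDegree_map]; exact h1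
  have dβ : (minpoly F β).natDegree = 3 := by rw [kβ, Polynomial.natDegree_map]; exact h2
  set g : F := ⟨α * β, mem_adjoin_simple_self ℚ (α * β)⟩ with hgdef
  have hg : algebraMap F ℂ g = α * β := rfl
  set a := (minpoly F α).coeff 2 with ha
  set b := (minpoly F α).coeff 1 with hb
  set c := (minpoly F α).coeff 0 with hc
  have hc0 : c ≠ 0 := by rcases cα01 with h | h <;> rw [h] <;> norm_num
  have hCc0 : algebraMap F ℂ c ≠ 0 := by
    simpa using (map_ne_zero (algebraMap F ℂ)).mpr hc0
  -- expansion of the minimal polynomial of α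
  have hlt : (minpoly F α).natDegree < 4 := by omega
  have hexp := Polynomial.aeval_eq_sum_range' hlt α
  rw [minpoly.aeval F α] at hexp
  have hcoeff3 : (minpoly F α).coeff 3 = 1 := by
    have := (minpoly.monic hαF).coeff_natDegree
    rwa [dα] at this
  simp only [Finset.sum_range_succ, Finset.sum_range_zero, zero_add, hcoeff3, one_smul,
    Algebra.smul_def, ← ha, ← hb, ← hc] at hexp
  set A := algebraMap F ℂ a with hA
  set B := algebraMap F ℂ b with hB
  set Cc := algebraMap F ℂ c with hCc
  have Eα : Cc + B * α + A * α ^ 2 + α ^ 3 = 0 := by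
    simp only [map_one] at hexp
    linear_combination -hexp
  -- the explicit cubic satisfied by β
  set q : Polynomial F := X ^ 3 + C (b * g / c) * X ^ 2 + C (a * g * g / c) * X
      + C (g * g * g / c) with hqdef
  have hqm : q.Monic := by
    rw [hqdef]
    monicity!
  have hqdeg : q.natDegree = 3 := by
    rw [hqdef]
    compute_degree!
  have hq0 : Polynomial.aeval β q = 0 := by
    simp only [hqdef, map_add, map_mul, map_pow, Polynomial.aeval_X, Polynomial.aeval_C]
    rw [map_div₀, map_div₀, map_div₀, map_mul, map_mul, map_mul, hg, ← hA, ← hB, ← hCc]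
    field_simp
    have hg3 : algebraMap F ℂ (g ^ 3) = (α * β) ^ 3 := by rw [map_pow, hg]
    linear_combination (β ^ 3) * Eα + hg3
  have hdvd : minpoly F β ∣ q := minpoly.dvd F β hq0
  obtain ⟨u, hu⟩ := hdvd
  have hum : u.Monic := (minpoly.monic hβF).of_mul_monic_left (hu ▸ hqm)
  have hudeg : u.natDegree = 0 := by
    have := hqdeg
    rw [hu, Polynomial.natDegree_mul (minpoly.ne_zero hβF) hum.ne_zero, dβ] at this
    omega
  have hu1 : u = 1 := Polynomial.eq_one_of_monic_natDegree_zero hum hudeg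
  have hqeq : q = minpoly F β := by rw [hu, hu1, mul_one]
  have hq0coeff : q.coeff 0 = g * g * g / c := by
    simp [hqdef, Polynomial.coeff_add, Polynomial.coeff_C_mul, Polynomial.coeff_X_pow]
  have hgc : g * g * g / c = (minpoly F β).coeff 0 := by rw [← hqeq, hq0coeff]
  have hg3 : g ^ 3 = 1 ∨ g ^ 3 = -1 := by
    have hgc' : g ^ 3 = (minpoly F β).coeff 0 * c := by
      field_simp at hgc
      linear_combination hgc
    rcases cβ01 with h | h <;> rcases cα01 with h' | h' <;>
      rw [hgc', h, h'] <;> norm_num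
  have : (algebraMap F ℂ g) ^ 3 = 1 ∨ (algebraMap F ℂ g) ^ 3 = -1 := by
    rcases hg3 with h | h
    · left; rw [← map_pow, h, map_one]
    · right; rw [← map_pow, h, map_neg, map_one]
  rwa [hg] at this
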